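/- Let A be a Schur-stable normal real n×n matrix (all eigenvalues of absolute value < 1, AᵀA = AAᵀ), Q positive definite, R positive definite, B ∈ R^{n×m}. Let P_worst solve the Lyapunov equation P = AᵀPA + Q and P_opt be any positive semidefinite solution of the Riccati equation P = Q + AᵀPA − AᵀPB(R + BᵀPB)^{-1}BᵀPA. Then tr(P_worst)/tr(P_opt) ≤ 1/(1 − λ_1(A)²), where λ_1(A) is the spectral radius of A. -/

import Mathlib

open Matrix Finset
open scoped MatrixOrder

/-- Smallest real eigenvalue of a real square matrix (sInf of the set of real eigenvalues). -/
noncomputable def lamMin {n : ℕ} (M : Matrix (Fin n) (Fin n) ℝ) : ℝ :=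
  sInf {x : ℝ | ∃ v : Fin n → ℝ, v ≠ 0 ∧ M *ᵥ v = x • v}

/-- Largest real eigenvalue of a real square matrix. -/
noncomputable def lamMax {n : ℕ} (M : Matrix (Fin n) (Fin n) ℝ) : ℝ :=
  sSup {x : ℝ | ∃ v : Fin n → ℝ, v ≠ 0 ∧ M *ᵥ v = x • v}

/-- Largest singular value of a real square matrix. -/
noncomputable def sigMax {n : ℕ} (M : Matrix (Fin n) (Fin n) ℝ) : ℝ :=
  Real.sqrt (lamMax (Mᵀ * M))

/-- Smallest singular value of a real square matrix. -/
noncomputable def sigMin {n : ℕ} (M : Matrix (Fin n) (Fin n) ℝ) : ℝ :=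
  Real.sqrt (lamMin (Mᵀ * M))

/-- `μ` is a (complex) eigenvalue of the real matrix `A`. -/
def IsEigC {n : ℕ} (A : Matrix (Fin n) (Fin n) ℝ) (μ : ℂ) : Prop :=
  ∃ v : Fin n → ℂ, v ≠ 0 ∧ (A.map (fun a => (a : ℂ))) *ᵥ v = μ • v

/-- All complex eigenvalues have modulus `< 1`. -/
def SchurStable {n : ℕ} (A : Matrix (Fin n) (Fin n) ℝ) : Prop :=
  ∀ μ : ℂ, IsEigC A μ → ‖μ‖ < 1

lemma eig_of_normal_eigvec {k : ℕ} (A : Matrix (Fin k) (Fin k) ℝ)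
    (hnormal : Aᵀ * A = A * Aᵀ)
    (lam : ℝ) (v : Fin k → ℝ) (hv : v ≠ 0) (hev : (A * Aᵀ) *ᵥ v = lam • v) :
    ∃ μ : ℂ, IsEigC A μ ∧ ‖μ‖ ^ 2 = lam := by
  set Ac : Matrix (Fin k) (Fin k) ℂ := A.map (fun a => (a : ℂ)) with hAc
  have hmapT : Aᵀ.map (fun a => (a : ℂ)) = Acᵀ := rfl
  have hmapmul : ∀ (M N : Matrix (Fin k) (Fin k) ℝ),
      (M * N).map (fun a => (a : ℂ)) = M.map (fun a => (a : ℂ)) * N.map (fun a => (a : ℂ)) := by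
    intro M N
    exact Matrix.map_mul (f := Complex.ofRealHom)
  have hnormC : Acᵀ * Ac = Ac * Acᵀ := by
    have := congrArg (Matrix.map · (fun a : ℝ => (a : ℂ))) hnormal
    simp only [hmapmul] at this
    exact this
  set Mc : Matrix (Fin k) (Fin k) ℂ := Ac * Acᵀ with hMc
  have hcomm : Mc * Ac = Ac * Mc := by
    rw [hMc, Matrix.mul_assoc, hnormC, ← Matrix.mul_assoc]
  -- complexified eigenvector
  set vc : Fin k → ℂ := fun i => (v i : ℂ) with hvc
  have hvc0 : vc ≠ 0 := by
    intro h
    apply hv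
    funext i
    have := congrFun h i
    simpa [hvc] using this
  have hevc : Mc *ᵥ vc = (lam : ℂ) • vc := by
    funext i
    have h1 : ((lam : ℂ) • vc) i = ((lam • v) i : ℂ) := by simp [hvc]
    rw [h1, ← hev]
    have := (RingHom.map_mulVec Complex.ofRealHom (A * Aᵀ) v i).symm
    rw [Matrix.map_mul] at this
    exact this
  -- invariant subspace
  set p : Submodule ℂ (Fin k → ℂ) := Module.End.eigenspace (Matrix.mulVecLin Mc) (lam : ℂ) with hp
  have hvcp : vc ∈ p := by
    rw [hp, Module.End.mem_eigenspace_iff]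
    simpa using hevc
  have hmaps : ∀ x ∈ p, Matrix.mulVecLin Ac x ∈ p := by
    intro x hx
    rw [hp, Module.End.mem_eigenspace_iff] at hx ⊢
    simp only [Matrix.mulVecLin_apply] at hx ⊢
    rw [Matrix.mulVec_mulVec, hcomm, ← Matrix.mulVec_mulVec, hx, Matrix.mulVec_smul]
  have : Nontrivial p := ⟨⟨⟨vc, hvcp⟩, 0, by simpa using hvc0⟩⟩
  set g : Module.End ℂ p := (Matrix.mulVecLin Ac).restrict hmaps with hg
  obtain ⟨μ, hμ⟩ := Module.End.exists_eigenvalue g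
  obtain ⟨w, hw⟩ := hμ.exists_hasEigenvector
  obtain ⟨hwmem, hgw⟩ := hw
  rw [Module.End.mem_eigenspace_iff] at hwmem
  set x : Fin k → ℂ := (w : Fin k → ℂ) with hx
  have hx0 : x ≠ 0 := by
    simpa [hx, Submodule.coe_eq_zero] using hgw
  have hAx : Ac *ᵥ x = μ • x := by
    have := congrArg (Subtype.val) hwmem
    simpa [hx, hg, LinearMap.restrict_apply, Matrix.mulVecLin_apply] using this
  have hMx : Mc *ᵥ x = (lam : ℂ) • x := by
    have h2 : Matrix.mulVecLin Mc (w : Fin k → ℂ) = (lam : ℂ) • (w : Fin k → ℂ) :=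
      Module.End.mem_eigenspace_iff.mp w.2
    simpa [hx, Matrix.mulVecLin_apply] using h2
  refine ⟨μ, ⟨x, hx0, hAx⟩, ?_⟩
  have hAcH : Acᴴ = Acᵀ := by
    ext i j
    simp [Matrix.conjTranspose_apply, hAc, Matrix.map_apply]
  have h1 : star x ⬝ᵥ (Mc *ᵥ x) = (lam : ℂ) * (star x ⬝ᵥ x) := by
    rw [hMx, dotProduct_smul, smul_eq_mul]
  have h2 : star x ⬝ᵥ (Mc *ᵥ x) = (starRingEnd ℂ μ * μ) * (star x ⬝ᵥ x) := by
    rw [← hnormC, ← Matrix.mulVec_mulVec, Matrix.dotProduct_mulVec, ← hAcH,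
      ← Matrix.star_mulVec, hAx]
    rw [star_smul, smul_dotProduct, dotProduct_smul]
    simp [smul_eq_mul, mul_assoc, mul_comm, mul_left_comm]
  have hsum : (star x ⬝ᵥ x : ℂ) = ((∑ j, Complex.normSq (x j) : ℝ) : ℂ) := by
    push_cast
    simp [dotProduct, Pi.star_apply, Complex.normSq_eq_conj_mul_self]
  have hs : (star x ⬝ᵥ x : ℂ) ≠ 0 := by
    rw [hsum]
    have hpos : 0 < ∑ j, Complex.normSq (x j) := by
      obtain ⟨i, hi⟩ : ∃ i, x i ≠ 0 := by
        by_contra h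
        push_neg at h
        exact hx0 (funext h)
      refine Finset.sum_pos' (fun j _ => Complex.normSq_nonneg _) ⟨i, Finset.mem_univ i, ?_⟩
      exact Complex.normSq_pos.mpr hi
    exact_mod_cast hpos.ne'
  have hlm : (lam : ℂ) = starRingEnd ℂ μ * μ := by
    have := h1.symm.trans h2
    exact mul_right_cancel₀ hs this
  have h3 : Complex.normSq μ = ‖μ‖ ^ 2 := by
    rw [Complex.normSq_eq_norm_sq]
  have : (lam : ℂ) = ((‖μ‖ ^ 2 : ℝ) : ℂ) := by
    rw [hlm, mul_comm, Complex.mul_conj, h3]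
  exact_mod_cast (Complex.ofReal_inj.mp this).symm

lemma AAt_le_rho_sq {k : ℕ} (A : Matrix (Fin k) (Fin k) ℝ)
    (hnormal : Aᵀ * A = A * Aᵀ) (ρ : ℝ)
    (hb : ∀ μ : ℂ, IsEigC A μ → ‖μ‖ ≤ ρ) :
    ((ρ ^ 2) • (1 : Matrix (Fin k) (Fin k) ℝ) - A * Aᵀ).PosSemidef := by
  have hAH : Aᴴ = Aᵀ := by ext i j; simp [Matrix.conjTranspose_apply]
  have hMpsd : (A * Aᵀ).PosSemidef := by
    have := Matrix.posSemidef_self_mul_conjTranspose A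
    rwa [hAH] at this
  have hMherm : (A * Aᵀ).IsHermitian := hMpsd.1
  set N : Matrix (Fin k) (Fin k) ℝ := (ρ ^ 2) • 1 - A * Aᵀ with hN
  have hNherm : N.IsHermitian := by
    rw [hN]
    show _ = _
    rw [Matrix.conjTranspose_sub, Matrix.conjTranspose_smul, Matrix.conjTranspose_one, hMherm.eq]
    simp
  refine hNherm.posSemidef_iff_eigenvalues_nonneg.mpr fun i => ?_
  set ν := hNherm.eigenvalues i with hν
  set u : Fin k → ℝ := ⇑(hNherm.eigenvectorBasis i) with hu
  have hu0 : u ≠ 0 := by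
    intro h
    apply hNherm.eigenvectorBasis.orthonormal.ne_zero i
    apply (WithLp.equiv 2 (Fin k → ℝ)).injective
    simpa [hu] using h
  have huev : N *ᵥ u = ν • u := hNherm.mulVec_eigenvectorBasis i
  have hMev : (A * Aᵀ) *ᵥ u = (ρ ^ 2 - ν) • u := by
    have h1 : ((ρ ^ 2) • (1 : Matrix (Fin k) (Fin k) ℝ)) *ᵥ u - (A * Aᵀ) *ᵥ u = ν • u := by
      rw [← Matrix.sub_mulVec, ← hN]; exact huev
    have h2 : ((ρ ^ 2) • (1 : Matrix (Fin k) (Fin k) ℝ)) *ᵥ u = (ρ ^ 2) • u := by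
      simp [Matrix.smul_mulVec]
    rw [h2] at h1
    have := congrArg (fun z => (ρ ^ 2) • u - z) h1.symm
    simp only [sub_sub_cancel] at this
    rw [← this, sub_smul]
  obtain ⟨μ, hμeig, hμ⟩ := eig_of_normal_eigvec A hnormal _ u hu0 hMev
  have h4 : ‖μ‖ ≤ ρ := hb μ hμeig
  have h5 : ‖μ‖ ^ 2 ≤ ρ ^ 2 := by
    have h0 : (0:ℝ) ≤ ‖μ‖ := norm_nonneg _
    nlinarith
  linarith [hμ ▸ h5, show (0 : Fin k → ℝ) i = 0 from rfl]

lemma psd_trace_nonneg {k : ℕ} {M : Matrix (Fin k) (Fin k) ℝ} (h : M.PosSemidef) :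
    0 ≤ M.trace := by
  have hd : ∀ i, 0 ≤ M i i := fun i => by
    have := h.dotProduct_mulVec_nonneg (Pi.single i 1)
    simpa [Matrix.mulVec_single, single_dotProduct] using this
  exact Finset.sum_nonneg fun i _ => hd i

lemma pd_trace_pos {k : ℕ} (hk : 0 < k) {M : Matrix (Fin k) (Fin k) ℝ} (h : M.PosDef) :
    0 < M.trace := by
  have hd : ∀ i, 0 < M i i := fun i => by
    have := h.dotProduct_mulVec_pos (x := Pi.single i 1) (fun h => by
      have h2 := congrFun h i
      rw [Pi.single_eq_same] at h2
      exact one_ne_zero h2)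
    simpa [Matrix.mulVec_single, single_dotProduct] using this
  have : Nonempty (Fin k) := ⟨⟨0, hk⟩⟩
  exact Finset.sum_pos (fun i _ => hd i) Finset.univ_nonempty

lemma trace_mul_psd_nonneg {k : ℕ} {M N : Matrix (Fin k) (Fin k) ℝ}
    (hM : M.PosSemidef) (hN : N.PosSemidef) : 0 ≤ (M * N).trace := by
  set L := CFC.sqrt M with hL
  have hLL : L * L = M := CFC.sqrt_mul_sqrt_self M hM.nonneg
  have hLh : Lᴴ = L := (CFC.sqrt_nonneg M).posSemidef.1
  have h1 : (M * N).trace = (L * N * L).trace := by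
    rw [← hLL, Matrix.trace_mul_cycle L N L]
  rw [h1]
  have : (Lᴴ * N * L).PosSemidef := hN.conjTranspose_mul_mul_same L
  rw [hLh] at this
  exact psd_trace_nonneg this

lemma contraction_psd {k l : ℕ} (C : Matrix (Fin k) (Fin l) ℝ) (R : Matrix (Fin l) (Fin l) ℝ)
    (hR : R.PosDef) :
    ((1 : Matrix (Fin k) (Fin k) ℝ) - C * (R + Cᵀ * C)⁻¹ * Cᵀ).PosSemidef := by
  have hCH : Cᴴ = Cᵀ := by ext i j; simp [Matrix.conjTranspose_apply]
  set S : Matrix (Fin l) (Fin l) ℝ := R + Cᵀ * C with hSdef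
  have hCtC : (Cᵀ * C).PosSemidef := by
    have := Matrix.posSemidef_conjTranspose_mul_self C
    rwa [hCH] at this
  have hS : S.PosDef := hR.add_posSemidef hCtC
  have hSi : S * S⁻¹ = 1 := Matrix.mul_nonsing_inv S hS.det_pos.ne'.isUnit
  have hRi : R⁻¹ * R = 1 := Matrix.nonsing_inv_mul R hR.det_pos.ne'.isUnit
  have e0 : Cᵀ * C = S - R := by rw [hSdef]; abel
  have e1 : R⁻¹ * (Cᵀ * C) * S⁻¹ = R⁻¹ - S⁻¹ := by
    rw [e0, Matrix.mul_sub, hRi, Matrix.sub_mul, Matrix.mul_assoc, hSi, Matrix.mul_one,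
      Matrix.one_mul]
  have e2 : C * R⁻¹ * Cᵀ * (C * S⁻¹ * Cᵀ) = C * R⁻¹ * Cᵀ - C * S⁻¹ * Cᵀ := by
    calc C * R⁻¹ * Cᵀ * (C * S⁻¹ * Cᵀ)
        = C * (R⁻¹ * (Cᵀ * C) * S⁻¹) * Cᵀ := by simp only [Matrix.mul_assoc]
      _ = C * (R⁻¹ - S⁻¹) * Cᵀ := by rw [e1]
      _ = C * R⁻¹ * Cᵀ - C * S⁻¹ * Cᵀ := by rw [Matrix.mul_sub, Matrix.sub_mul]
  set W : Matrix (Fin k) (Fin k) ℝ := 1 + C * R⁻¹ * Cᵀ with hWdef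
  have key : W * (1 - C * S⁻¹ * Cᵀ) = 1 := by
    rw [hWdef, Matrix.add_mul, Matrix.one_mul, Matrix.mul_sub, Matrix.mul_one, e2]
    abel
  have hCRC : (C * R⁻¹ * Cᵀ).PosSemidef := by
    have := hR.inv.posSemidef.mul_mul_conjTranspose_same C
    rwa [hCH] at this
  have hW : W.PosDef := by
    rw [hWdef, add_comm]
    exact Matrix.PosDef.posSemidef_add hCRC Matrix.PosDef.one
  have hWinv : W⁻¹ = 1 - C * S⁻¹ * Cᵀ := Matrix.inv_eq_right_inv key
  have := hW.inv
  rw [hWinv] at this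
  exact this.posSemidef

theorem stmt16 {n m : ℕ} (hn : 0 < n) (A Q Pw Po : Matrix (Fin n) (Fin n) ℝ)
    (B : Matrix (Fin n) (Fin m) ℝ) (R : Matrix (Fin m) (Fin m) ℝ)
    (hnormal : Aᵀ * A = A * Aᵀ) (hstable : SchurStable A)
    (hQ : Q.PosDef) (hR : R.PosDef) (hPw : Pw.PosSemidef) (hPo : Po.PosSemidef)
    (heqw : Pw = Aᵀ * Pw * A + Q)
    (heqo : Po = Q + Aᵀ * Po * A - Aᵀ * Po * B * (R + Bᵀ * Po * B)⁻¹ * Bᵀ * Po * A)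
    (ρ : ℝ) (hρ : (∃ μ : ℂ, IsEigC A μ ∧ ‖μ‖ = ρ) ∧ ∀ μ : ℂ, IsEigC A μ → ‖μ‖ ≤ ρ) :
    Pw.trace / Po.trace ≤ 1 / (1 - ρ ^ 2) := by
  obtain ⟨⟨μ0, hμ0eig, hμ0norm⟩, hub⟩ := hρ
  have hρ0 : 0 ≤ ρ := hμ0norm ▸ norm_nonneg μ0
  have hρ1 : ρ < 1 := hμ0norm ▸ hstable μ0 hμ0eig
  have h1ρ : 0 < 1 - ρ ^ 2 := by nlinarith
  have hQt : 0 < Q.trace := pd_trace_pos hn hQ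
  have hPwt : 0 ≤ Pw.trace := psd_trace_nonneg hPw
  -- step 1 : (1 - ρ²) tr Pw ≤ tr Q
  have hMle := AAt_le_rho_sq A hnormal ρ hub
  have htr1 : (Aᵀ * Pw * A).trace = (A * Aᵀ * Pw).trace := Matrix.trace_mul_cycle Aᵀ Pw A
  have hkey : 0 ≤ ((ρ ^ 2 • (1 : Matrix (Fin n) (Fin n) ℝ) - A * Aᵀ) * Pw).trace :=
    trace_mul_psd_nonneg hMle hPw
  have hexp : ((ρ ^ 2 • (1 : Matrix (Fin n) (Fin n) ℝ) - A * Aᵀ) * Pw).trace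
      = ρ ^ 2 * Pw.trace - (A * Aᵀ * Pw).trace := by
    rw [Matrix.sub_mul, Matrix.smul_mul, Matrix.one_mul, Matrix.trace_sub, Matrix.trace_smul,
      smul_eq_mul]
  have h5 : 0 ≤ ρ ^ 2 * Pw.trace - (A * Aᵀ * Pw).trace := hexp ▸ hkey
  have htrPw : Pw.trace = (A * Aᵀ * Pw).trace + Q.trace := by
    conv_lhs => rw [heqw]
    rw [Matrix.trace_add, htr1]
  have hPwle : (1 - ρ ^ 2) * Pw.trace ≤ Q.trace := by nlinarith
  -- step 2 : tr Q ≤ tr Po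
  set L := CFC.sqrt Po with hLdef
  have hLL : L * L = Po := CFC.sqrt_mul_sqrt_self Po hPo.nonneg
  have hLt : Lᵀ = L := by
    have h := (CFC.sqrt_nonneg Po).posSemidef.1
    have : Lᴴ = Lᵀ := by ext i j; simp [Matrix.conjTranspose_apply]
    rw [← this]; exact h
  have hLLZ : ∀ {p : ℕ} (Z : Matrix (Fin n) (Fin p) ℝ), L * (L * Z) = Po * Z := by
    intro p Z; rw [← Matrix.mul_assoc, hLL]
  have hCt : (L * B)ᵀ = Bᵀ * L := by rw [Matrix.transpose_mul, hLt]
  have hCtC : (L * B)ᵀ * (L * B) = Bᵀ * Po * B := by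
    rw [hCt, Matrix.mul_assoc, hLLZ, ← Matrix.mul_assoc]
  have hD := contraction_psd (L * B) R hR
  rw [hCtC] at hD
  have hRHS : (L * A)ᵀ * ((1 : Matrix (Fin n) (Fin n) ℝ)
        - L * B * (R + Bᵀ * Po * B)⁻¹ * (L * B)ᵀ) * (L * A)
      = Aᵀ * Po * A - Aᵀ * Po * B * (R + Bᵀ * Po * B)⁻¹ * Bᵀ * Po * A := by
    simp only [Matrix.transpose_mul, hLt, hCt, Matrix.mul_sub, Matrix.sub_mul, Matrix.mul_one,
      Matrix.mul_assoc]
    simp only [hLLZ]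
  have hPoQ : Po - Q = (L * A)ᵀ * ((1 : Matrix (Fin n) (Fin n) ℝ)
        - L * B * (R + Bᵀ * Po * B)⁻¹ * (L * B)ᵀ) * (L * A) := by
    rw [hRHS]
    conv_lhs => rw [heqo]
    abel
  have hPoQpsd : (Po - Q).PosSemidef := by
    rw [hPoQ]
    have h := hD.conjTranspose_mul_mul_same (L * A)
    have hH : (L * A)ᴴ = (L * A)ᵀ := by ext i j; simp [Matrix.conjTranspose_apply]
    rwa [hH] at h
  have hQPo : Q.trace ≤ Po.trace := by
    have := psd_trace_nonneg hPoQpsd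
    rw [Matrix.trace_sub] at this
    linarith
  -- final arithmetic
  have hPot : 0 < Po.trace := lt_of_lt_of_le hQt hQPo
  calc Pw.trace / Po.trace ≤ Pw.trace / Q.trace := by
        apply div_le_div_of_nonneg_left hPwt hQt hQPo
    _ ≤ 1 / (1 - ρ ^ 2) := by
        rw [div_le_div_iff₀ hQt h1ρ]
        nlinarith
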